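/- Let b = (b_1, …, b_p) be a composition of n into p non-negative parts. Then ℓ(w_b) = ∑_{1 ≤ i < j ≤ p} b_i b_j, where ℓ(w) denotes the number of inversions of w, ℓ(w) = #{(i,j) : 1 ≤ i < j ≤ n, w(i) > w(j)}. -/

import Mathlib

namespace SymStmt

/-- The simple transposition `s_i = (i, i+1)`, as a permutation of `ℕ`
(only the indices `1 ≤ i < n` are ever used). -/
def s (i : ℕ) : Equiv.Perm ℕ := Equiv.swap i (i + 1)

/-- `w^{⟨k⟩}_{a,b} = (s_{a+b+k-1} s_{a+b+k-2} ⋯ s_{k+1})^b`, where in a word the leftmost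
letter is applied first; thus the underlying cycle is `s_{k+1} ∘ s_{k+2} ∘ ⋯ ∘ s_{a+b+k-1}`,
i.e. the product of the list `[s_{k+1}, s_{k+2}, …, s_{a+b+k-1}]`. -/
def wk (k a b : ℕ) : Equiv.Perm ℕ :=
  (((List.range (a + b - 1)).map fun j => s (k + 1 + j)).prod) ^ b

/-- The length of `w` as an element of `S_n`: the number of inversions
`#{(i,j) : 1 ≤ i < j ≤ n, w i > w j}`. -/
def len (n : ℕ) (w : Equiv.Perm ℕ) : ℕ :=
  ((Finset.Icc 1 n ×ˢ Finset.Icc 1 n).filter fun x => x.1 < x.2 ∧ w x.2 < w x.1).card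

/-- Partial sums `b_i^j = b_i + b_{i+1} + ⋯ + b_j` (equal to `0` if `i > j`). -/
def Bsum (b : ℕ → ℕ) (i j : ℕ) : ℕ := ∑ t ∈ Finset.Icc i j, b t

/-- `w_b` for a composition `b = (b_1, …, b_p)`: the composite obtained by applying
`w^{⟨b_1^{t-1}⟩}_{b_t, b_{t+1}^p}` successively for `t = p-1, p-2, …, 1` (the factor with
`t = p-1` applied first, the factor with `t = 1` applied last). -/
def wcomp (p : ℕ) (b : ℕ → ℕ) : Equiv.Perm ℕ :=
  ((List.range (p - 1)).map fun x => wk (Bsum b 1 x) (b (x + 1)) (Bsum b (x + 2) p)).prod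

end SymStmt

namespace SymAux
open SymStmt

/-! ### The basic cycle and its powers -/

def Lp (k r : ℕ) : Equiv.Perm ℕ := ((List.range r).map fun j => s (k + 1 + j)).prod

lemma Lp_succ (k r : ℕ) : Lp k (r + 1) = Lp k r * s (k + 1 + r) := by
  unfold Lp
  rw [List.range_succ, List.map_append, List.prod_append]
  simp

lemma s_apply_left (i : ℕ) : s i i = i + 1 := Equiv.swap_apply_left i (i+1)
lemma s_apply_right (i : ℕ) : s i (i+1) = i := Equiv.swap_apply_right i (i+1)
lemma s_apply_other (i x : ℕ) (h1 : x ≠ i) (h2 : x ≠ i + 1) : s i x = x :=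
  Equiv.swap_apply_of_ne_of_ne h1 h2

lemma Lp_out (k r x : ℕ) (h : x ≤ k ∨ k + r + 1 < x) : Lp k r x = x := by
  induction r with
  | zero => rfl
  | succ r ih =>
    rw [Lp_succ]
    simp only [Equiv.Perm.mul_apply]
    rw [s_apply_other _ _ (by omega) (by omega)]
    exact ih (by omega)

lemma Lp_mid (k r x : ℕ) (h1 : k < x) (h2 : x ≤ k + r) : Lp k r x = x + 1 := by
  induction r with
  | zero => omega
  | succ r ih =>
    rw [Lp_succ]
    simp only [Equiv.Perm.mul_apply]
    rcases Nat.lt_or_ge x (k + 1 + r) with h | h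
    · rw [s_apply_other _ _ (by omega) (by omega)]
      exact ih (by omega)
    · have hx : x = k + 1 + r := by omega
      subst hx
      rw [s_apply_left]
      rw [Lp_out k r _ (by omega)]

lemma Lp_top (k r : ℕ) : Lp k r (k + r + 1) = k + 1 := by
  induction r with
  | zero => rfl
  | succ r ih =>
    rw [Lp_succ]
    simp only [Equiv.Perm.mul_apply]
    have : k + (r + 1) + 1 = (k + 1 + r) + 1 := by omega
    rw [this, s_apply_right]
    have : k + 1 + r = k + r + 1 := by omega
    rw [this, ih]

lemma Lp_pow_out (k r x e : ℕ) (h : x ≤ k ∨ k + r + 1 < x) : (Lp k r ^ e) x = x := by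
  induction e with
  | zero => rfl
  | succ e ih =>
    rw [pow_succ]
    simp only [Equiv.Perm.mul_apply]
    rw [Lp_out k r x h, ih]

lemma Lp_pow (k r : ℕ) : ∀ e x, e ≤ r + 1 → k < x → x ≤ k + r + 1 →
    (Lp k r ^ e) x = if x + e ≤ k + r + 1 then x + e else x + e - (r + 1) := by
  intro e
  induction e with
  | zero =>
    intro x he h1 h2
    rw [if_pos (by omega)]
    rfl
  | succ e ih =>
    intro x he h1 h2
    rw [pow_succ]
    simp only [Equiv.Perm.mul_apply]
    rcases Nat.lt_or_ge x (k + r + 1) with h | h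
    · rw [Lp_mid k r x h1 (by omega), ih (x + 1) (by omega) (by omega) (by omega)]
      split_ifs <;> omega
    · have hx : x = k + r + 1 := by omega
      subst hx
      rw [Lp_top, ih (k + 1) (by omega) (by omega) (by omega)]
      split_ifs <;> omega

/-! ### The block-swap permutation `wk` -/

lemma wk_eq (k a m : ℕ) : wk k a m = (Lp k (a + m - 1)) ^ m := rfl

lemma wk_out (k a m x : ℕ) (h : x ≤ k ∨ k + a + m < x) : wk k a m x = x := by
  rcases Nat.eq_zero_or_pos (a + m) with h0 | h0
  · have : m = 0 := by omega
    subst this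
    rfl
  · rw [wk_eq]
    exact Lp_pow_out k (a + m - 1) x m (by omega)

lemma wk_first (k a m x : ℕ) (h1 : k < x) (h2 : x ≤ k + a) : wk k a m x = x + m := by
  rcases Nat.eq_zero_or_pos m with h0 | h0
  · subst h0; rfl
  · rw [wk_eq, Lp_pow k (a + m - 1) m x (by omega) h1 (by omega), if_pos (by omega)]

lemma wk_second (k a m x : ℕ) (h1 : k + a < x) (h2 : x ≤ k + a + m) : wk k a m x = x - a := by
  have hm : 0 < m := by omega
  rw [wk_eq, Lp_pow k (a + m - 1) m x (by omega) (by omega) (by omega), if_neg (by omega)]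
  omega

/-! ### Partial sums -/

def Bm (b : ℕ → ℕ) (c : ℕ) : ℕ := ∑ j ∈ Finset.Ioc 0 c, b j
def Sm (p : ℕ) (b : ℕ → ℕ) (c : ℕ) : ℕ := ∑ j ∈ Finset.Ioc c p, b j

lemma Bsum_succ_eq (b : ℕ → ℕ) (c j : ℕ) : Bsum b (c + 1) j = ∑ i ∈ Finset.Ioc c j, b i := by
  rw [Bsum, ← Finset.Icc_add_one_left_eq_Ioc]

lemma Bsum_one (b : ℕ → ℕ) (j : ℕ) : Bsum b 1 j = Bm b j := Bsum_succ_eq b 0 j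

lemma Ioc_single (b : ℕ → ℕ) (c : ℕ) : ∑ j ∈ Finset.Ioc c (c + 1), b j = b (c + 1) := by
  rw [← Finset.Icc_add_one_left_eq_Ioc, Finset.Icc_self, Finset.sum_singleton]

lemma Bm_succ (b : ℕ → ℕ) (c : ℕ) : Bm b (c + 1) = Bm b c + b (c + 1) := by
  rw [Bm, Bm, ← Finset.sum_Ioc_consecutive (fun j => b j) (Nat.zero_le c) (by omega),
    Ioc_single]

lemma Bm_mono (b : ℕ → ℕ) {c d : ℕ} (h : c ≤ d) : Bm b c ≤ Bm b d :=
  Finset.sum_le_sum_of_subset (Finset.Ioc_subset_Ioc le_rfl h)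

lemma Sm_split (p : ℕ) (b : ℕ → ℕ) {c d : ℕ} (h1 : c ≤ d) (h2 : d ≤ p) :
    (∑ j ∈ Finset.Ioc c d, b j) + Sm p b d = Sm p b c :=
  Finset.sum_Ioc_consecutive (fun j => b j) h1 h2

lemma Bm_add_Sm (p : ℕ) (b : ℕ → ℕ) {c : ℕ} (h : c ≤ p) : Bm b c + Sm p b c = Bm b p :=
  Finset.sum_Ioc_consecutive (fun j => b j) (Nat.zero_le c) h

lemma Sm_p (p : ℕ) (b : ℕ → ℕ) : Sm p b p = 0 := by
  rw [Sm, Finset.Ioc_self, Finset.sum_empty]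

lemma Bm_zero (b : ℕ → ℕ) : Bm b 0 = 0 := by
  rw [Bm, Finset.Ioc_self, Finset.sum_empty]

lemma b_le_Sum (b : ℕ → ℕ) {c d : ℕ} (h : c < d) : b d ≤ ∑ j ∈ Finset.Ioc c d, b j :=
  Finset.single_le_sum (fun i _ => Nat.zero_le (b i)) (Finset.mem_Ioc.2 ⟨h, le_rfl⟩)

/-! ### Suffix products of `wcomp` -/

def R (p : ℕ) (b : ℕ → ℕ) (c : ℕ) : Equiv.Perm ℕ :=
  ((List.range (p - 1 - c)).map fun x =>
    wk (Bm b (c + x)) (b (c + x + 1)) (Sm p b (c + x + 1))).prod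

lemma R_succ (p : ℕ) (b : ℕ → ℕ) (c : ℕ) (h : c < p - 1) :
    R p b c = wk (Bm b c) (b (c + 1)) (Sm p b (c + 1)) * R p b (c + 1) := by
  unfold R
  have h1 : p - 1 - c = (p - 1 - (c + 1)) + 1 := by omega
  rw [h1, List.range_succ_eq_map, List.map_cons, List.prod_cons, List.map_map]
  have h3 : ((fun x => wk (Bm b (c + x)) (b (c + x + 1)) (Sm p b (c + x + 1))) ∘ Nat.succ)
      = fun x => wk (Bm b (c + 1 + x)) (b (c + 1 + x + 1)) (Sm p b (c + 1 + x + 1)) := by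
    funext x
    simp only [Function.comp_apply]
    have h2 : c + Nat.succ x = c + 1 + x := by omega
    rw [h2]
  rw [h3, Nat.add_zero]

lemma R_last (p : ℕ) (b : ℕ → ℕ) (c : ℕ) (h : p - 1 ≤ c) : R p b c = 1 := by
  unfold R
  have : p - 1 - c = 0 := by omega
  rw [this]
  rfl

lemma R_fix (p : ℕ) (b : ℕ → ℕ) : ∀ d c, p - 1 - c = d → ∀ x, x ≤ Bm b c → R p b c x = x := by
  intro d
  induction d with
  | zero =>
    intro c hc x hx
    rw [R_last p b c (by omega)]
    rfl
  | succ d ih =>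
    intro c hc x hx
    rw [R_succ p b c (by omega)]
    simp only [Equiv.Perm.mul_apply]
    rw [ih (c + 1) (by omega) x (le_trans hx (Bm_mono b (by omega)))]
    exact wk_out _ _ _ _ (Or.inl hx)

lemma R_apply (p : ℕ) (b : ℕ → ℕ) :
    ∀ d t c, 1 ≤ t → t ≤ p → c + d + 1 = t → ∀ x, Bm b (t - 1) < x → x ≤ Bm b t →
    R p b c x = (x - Bm b (t - 1)) + Bm b c + Sm p b t := by
  intro d
  induction d with
  | zero =>
    intro t c h1 h2 hc x hx1 hx2
    have hct : c = t - 1 := by omega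
    subst hct
    rcases Nat.eq_or_lt_of_le h2 with hpt | hpt
    · -- t = p
      have hS : Sm p b t = 0 := by rw [hpt]; exact Sm_p p b
      rw [R_last p b (t - 1) (by omega), hS]
      simp only [Equiv.Perm.one_apply]
      omega
    · -- t < p
      rw [R_succ p b (t - 1) (by omega)]
      simp only [Equiv.Perm.mul_apply]
      have ht1 : t - 1 + 1 = t := by omega
      rw [ht1, R_fix p b (p - 1 - t) t rfl x hx2]
      have hBt : Bm b t = Bm b (t - 1) + b t := by
        conv_lhs => rw [← ht1]
        rw [Bm_succ, ht1]
      rw [wk_first _ _ _ _ hx1 (by omega)]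
      omega
  | succ d ih =>
    intro t c h1 h2 hc x hx1 hx2
    rw [R_succ p b c (by omega)]
    simp only [Equiv.Perm.mul_apply]
    rw [ih t (c + 1) h1 h2 (by omega) x hx1 hx2]
    have hBc : Bm b (c + 1) = Bm b c + b (c + 1) := Bm_succ b c
    have hBt : Bm b t = Bm b (t - 1) + b t := by
      have ht1 : t - 1 + 1 = t := by omega
      conv_lhs => rw [← ht1]
      rw [Bm_succ, ht1]
    have hSm : (∑ j ∈ Finset.Ioc (c + 1) t, b j) + Sm p b t = Sm p b (c + 1) :=
      Sm_split p b (by omega) h2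
    have hbt : b t ≤ ∑ j ∈ Finset.Ioc (c + 1) t, b j := b_le_Sum b (by omega)
    rw [wk_second (Bm b c) (b (c + 1)) (Sm p b (c + 1)) _ (by omega) (by omega)]
    omega

lemma wcomp_eq_R (p : ℕ) (b : ℕ → ℕ) : wcomp p b = R p b 0 := by
  unfold wcomp R
  rw [Nat.sub_zero]
  congr 1
  apply List.map_congr_left
  intro x _
  rw [Nat.zero_add, Bsum_one, Bsum_succ_eq]
  rfl

lemma wcomp_apply (p : ℕ) (b : ℕ → ℕ) (t x : ℕ) (h1 : 1 ≤ t) (h2 : t ≤ p)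
    (hx1 : Bm b (t - 1) < x) (hx2 : x ≤ Bm b t) :
    wcomp p b x = (x - Bm b (t - 1)) + Sm p b t := by
  rw [wcomp_eq_R, R_apply p b (t - 1) t 0 h1 h2 (by omega) x hx1 hx2, Bm_zero]
  omega

lemma exists_block (b : ℕ → ℕ) : ∀ p x, 0 < x → x ≤ Bm b p →
    ∃ t, 1 ≤ t ∧ t ≤ p ∧ Bm b (t - 1) < x ∧ x ≤ Bm b t := by
  intro p
  induction p with
  | zero => intro x h1 h2; rw [Bm_zero] at h2; omega
  | succ p ih =>
    intro x h1 h2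
    rcases le_or_gt x (Bm b p) with h | h
    · obtain ⟨t, ht⟩ := ih x h1 h
      exact ⟨t, ht.1, by omega, ht.2.2⟩
    · exact ⟨p + 1, by omega, le_rfl, by simpa using h, h2⟩

end SymAux

open SymStmt SymAux in
theorem stmt_8 (n p : ℕ) (hn : 1 ≤ n) (hp : 2 ≤ p) (b : ℕ → ℕ)
    (hb : Bsum b 1 p = n) :
    len n (wcomp p b) = ∑ i ∈ Finset.Icc 1 p, ∑ j ∈ Finset.Ioc i p, b i * b j := by
  classical
  have hBp : Bm b p = n := by rw [← hb, Bsum_one]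
  -- block membership implies value formula
  have hkey : ∀ t x, 1 ≤ t → t ≤ p → Bm b (t - 1) < x → x ≤ Bm b t →
      wcomp p b x = (x - Bm b (t - 1)) + Sm p b t := fun t x h1 h2 h3 h4 =>
    wcomp_apply p b t x h1 h2 h3 h4
  have hBsucc : ∀ t, 1 ≤ t → Bm b t = Bm b (t - 1) + b t := by
    intro t ht
    have h1 : t - 1 + 1 = t := by omega
    conv_lhs => rw [← h1]
    rw [Bm_succ, h1]
  -- blocks are uniquely determined
  have huniq : ∀ t u x, 1 ≤ t → 1 ≤ u → Bm b (t - 1) < x → x ≤ Bm b t →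
      Bm b (u - 1) < x → x ≤ Bm b u → t = u := by
    intro t u x ht hu h1 h2 h3 h4
    by_contra hne
    rcases Nat.lt_or_ge t u with h | h
    · have := Bm_mono b (show t ≤ u - 1 by omega)
      omega
    · have := Bm_mono b (show u ≤ t - 1 by omega)
      omega
  rw [len]
  have hset : ((Finset.Icc 1 n ×ˢ Finset.Icc 1 n).filter fun x =>
        x.1 < x.2 ∧ (wcomp p b) x.2 < (wcomp p b) x.1)
      = ((Finset.Icc 1 p ×ˢ Finset.Icc 1 p).filter fun tu => tu.1 < tu.2).biUnion
        (fun tu => Finset.Ioc (Bm b (tu.1 - 1)) (Bm b tu.1)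
          ×ˢ Finset.Ioc (Bm b (tu.2 - 1)) (Bm b tu.2)) := by
    ext ⟨x, y⟩
    simp only [Finset.mem_filter, Finset.mem_product, Finset.mem_Icc, Finset.mem_biUnion,
      Finset.mem_Ioc]
    constructor
    · rintro ⟨⟨⟨hx1, hx2⟩, hy1, hy2⟩, hxy, hw⟩
      obtain ⟨t, ht1, ht2, ht3, ht4⟩ := exists_block b p x (by omega) (by omega)
      obtain ⟨u, hu1, hu2, hu3, hu4⟩ := exists_block b p y (by omega) (by omega)
      refine ⟨⟨t, u⟩, ⟨⟨⟨ht1, ht2⟩, hu1, hu2⟩, ?_⟩, ⟨ht3, ht4⟩, hu3, hu4⟩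
      -- show t < u
      rw [hkey t x ht1 ht2 ht3 ht4, hkey u y hu1 hu2 hu3 hu4] at hw
      rcases Nat.lt_trichotomy t u with h | h | h
      · exact h
      · subst h
        omega
      · have := Bm_mono b (show u ≤ t - 1 by omega)
        omega
    · rintro ⟨⟨t, u⟩, ⟨⟨⟨ht1, ht2⟩, hu1, hu2⟩, htu⟩, ⟨hx3, hx4⟩, hy3, hy4⟩
      dsimp only at ht1 ht2 hu1 hu2 htu hx3 hx4 hy3 hy4
      have hmt : Bm b t ≤ Bm b (u - 1) := Bm_mono b (by omega)
      have hxy : x < y := by omega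
      have hbn : Bm b t ≤ n := hBp ▸ Bm_mono b ht2
      have hbn' : Bm b u ≤ n := hBp ▸ Bm_mono b hu2
      refine ⟨⟨⟨by omega, by omega⟩, by omega, by omega⟩, hxy, ?_⟩
      rw [hkey t x ht1 ht2 hx3 hx4, hkey u y hu1 hu2 hy3 hy4]
      have hS : (∑ j ∈ Finset.Ioc t u, b j) + Sm p b u = Sm p b t :=
        Sm_split p b (by omega) hu2
      have hbu : b u ≤ ∑ j ∈ Finset.Ioc t u, b j := b_le_Sum b htu
      have hBu : Bm b u = Bm b (u - 1) + b u := hBsucc u hu1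
      omega
  rw [hset, Finset.card_biUnion]
  · have hcard : ∀ tu ∈ (Finset.Icc 1 p ×ˢ Finset.Icc 1 p).filter fun tu => tu.1 < tu.2,
        (Finset.Ioc (Bm b (tu.1 - 1)) (Bm b tu.1)
          ×ˢ Finset.Ioc (Bm b (tu.2 - 1)) (Bm b tu.2)).card = b tu.1 * b tu.2 := by
      rintro ⟨t, u⟩ htu
      simp only [Finset.mem_filter, Finset.mem_product, Finset.mem_Icc] at htu
      dsimp only at htu ⊢
      rw [Finset.card_product, Nat.card_Ioc, Nat.card_Ioc]
      have h1 := hBsucc t htu.1.1.1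
      have h2 := hBsucc u htu.1.2.1
      congr 1 <;> omega
    rw [Finset.sum_congr rfl hcard, Finset.sum_filter, Finset.sum_product]
    refine Finset.sum_congr rfl fun i hi => ?_
    rw [← Finset.sum_filter]
    refine Finset.sum_congr ?_ fun j _ => rfl
    ext j
    simp only [Finset.mem_filter, Finset.mem_Icc, Finset.mem_Ioc]
    omega
  · -- disjointness
    rintro ⟨t, u⟩ htu ⟨t', u'⟩ htu' hne
    simp only [Finset.coe_filter, Set.mem_setOf_eq, Finset.mem_coe, Finset.mem_filter, Finset.mem_product, Finset.mem_Icc] at htu htu'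
    rw [Function.onFun, Finset.disjoint_left]
    rintro ⟨x, y⟩ hmem hmem'
    simp only [Finset.mem_product, Finset.mem_Ioc] at hmem hmem'
    have ht : t = t' := huniq t t' x htu.1.1.1 htu'.1.1.1
      hmem.1.1 hmem.1.2 hmem'.1.1 hmem'.1.2
    have hu : u = u' := huniq u u' y htu.1.2.1 htu'.1.2.1
      hmem.2.1 hmem.2.2 hmem'.2.1 hmem'.2.2
    exact hne (by rw [ht, hu])
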